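/- arXiv:2411.01461 — 3 statements merged into one kernel-verified Lean document; each statement's English description precedes it below -/
import Mathlib

section
/- Let λ₊(ξ) = (-1 + √(1-4γ|ξ|²))/(2γ) and λ₋(ξ) = (-1 - √(1-4γ|ξ|²))/(2γ) for γ > 0 and ξ ∈ ℝ², with the square root interpreted as a purely imaginary number when 1 - 4γ|ξ|² < 0. Define K̂₀(ξ,t) = (e^{λ₊t} + e^{λ₋t})/2 and K̂₁(ξ,t) = (e^{λ₊t} - e^{λ₋t})/(γ(λ₊ - λ₋)). Then for all ξ with 4γ|ξ|² ≥ 3/4 and all t > 0, one has |K̂₀(ξ,t)| ≤ C e^{-t/(8γ)} and |K̂₁(ξ,t)| ≤ C e^{-t/(8γ)} for an absolute constant C. -/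
open Real

noncomputable section

/-- The square root of the discriminant `1 - 4γ|ξ|²`, interpreted as a purely
imaginary number when `1 - 4γ|ξ|² < 0`. -/
def discRoot (γ : ℝ) (ξ : EuclideanSpace ℝ (Fin 2)) : ℂ :=
  if 0 ≤ 1 - 4 * γ * ‖ξ‖ ^ 2 then ((Real.sqrt (1 - 4 * γ * ‖ξ‖ ^ 2) : ℝ) : ℂ)
  else Complex.I * ((Real.sqrt (4 * γ * ‖ξ‖ ^ 2 - 1) : ℝ) : ℂ)

/-- `λ₊(ξ) = (-1 + √(1-4γ|ξ|²))/(2γ)`. -/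
def lamPlus (γ : ℝ) (ξ : EuclideanSpace ℝ (Fin 2)) : ℂ :=
  (-1 + discRoot γ ξ) / (2 * (γ : ℂ))

/-- `λ₋(ξ) = (-1 - √(1-4γ|ξ|²))/(2γ)`. -/
def lamMinus (γ : ℝ) (ξ : EuclideanSpace ℝ (Fin 2)) : ℂ :=
  (-1 - discRoot γ ξ) / (2 * (γ : ℂ))

/-- `K̂₀(ξ,t) = (e^{λ₊t} + e^{λ₋t})/2`. -/
def K0hat (γ : ℝ) (ξ : EuclideanSpace ℝ (Fin 2)) (t : ℝ) : ℂ :=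
  (Complex.exp (lamPlus γ ξ * (t : ℂ)) + Complex.exp (lamMinus γ ξ * (t : ℂ))) / 2

/-- `K̂₁(ξ,t) = (e^{λ₊t} - e^{λ₋t})/(γ(λ₊ - λ₋))`. -/
def K1hat (γ : ℝ) (ξ : EuclideanSpace ℝ (Fin 2)) (t : ℝ) : ℂ :=
  (Complex.exp (lamPlus γ ξ * (t : ℂ)) - Complex.exp (lamMinus γ ξ * (t : ℂ))) /
    ((γ : ℂ) * (lamPlus γ ξ - lamMinus γ ξ))

lemma aux_mul_exp (u : ℝ) (hu : 0 ≤ u) : u * Real.exp (-u) ≤ 1 := by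
  have h1 : u ≤ Real.exp u := by
    have := Real.add_one_le_exp u; linarith
  have h2 : u * Real.exp (-u) ≤ Real.exp u * Real.exp (-u) :=
    mul_le_mul_of_nonneg_right h1 (Real.exp_pos _).le
  calc u * Real.exp (-u) ≤ Real.exp u * Real.exp (-u) := h2
    _ = 1 := by rw [← Real.exp_add]; simp

lemma aux_te (γ t : ℝ) (hγ : 0 < γ) (ht : 0 < t) :
    t / γ * Real.exp (-(t / (4 * γ))) ≤ 8 * Real.exp (-(t / (8 * γ))) := by
  set e := Real.exp (-(t / (8 * γ))) with he
  have hepos : 0 < e := Real.exp_pos _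
  have hsplit : Real.exp (-(t / (4 * γ))) = e * e := by
    rw [he, ← Real.exp_add]; ring_nf
  have key : t / (8 * γ) * e ≤ 1 := aux_mul_exp _ (by positivity)
  have htγ : t / γ = 8 * (t / (8 * γ)) := by field_simp
  rw [hsplit, htγ]
  nlinarith [key, hepos, mul_pos (div_pos ht (by positivity : (0:ℝ) < 8 * γ)) hepos]

lemma denom_eq (γ : ℝ) (ξ : EuclideanSpace ℝ (Fin 2)) (hγ : γ ≠ 0) :
    (γ : ℂ) * (lamPlus γ ξ - lamMinus γ ξ) = discRoot γ ξ := by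
  have : (γ : ℂ) ≠ 0 := by exact_mod_cast hγ
  rw [lamPlus, lamMinus]
  field_simp
  ring

set_option maxHeartbeats 1000000 in
/-- High-frequency bounds: for `4γ|ξ|² ≥ 3/4` and `t > 0`,
`|K̂₀(ξ,t)| ≤ C e^{-t/(8γ)}` and `|K̂₁(ξ,t)| ≤ C e^{-t/(8γ)}`. -/
theorem stmt_5 :
    ∃ C : ℝ, 0 < C ∧ ∀ (γ t : ℝ) (ξ : EuclideanSpace ℝ (Fin 2)),
      0 < γ → 0 < t → 3/4 ≤ 4 * γ * ‖ξ‖ ^ 2 →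
        ‖K0hat γ ξ t‖ ≤ C * Real.exp (-(t / (8 * γ))) ∧
        ‖K1hat γ ξ t‖ ≤ C * Real.exp (-(t / (8 * γ))) := by
  refine ⟨8, by norm_num, fun γ t ξ hγ ht hR => ?_⟩
  have hγC : (γ : ℂ) ≠ 0 := by exact_mod_cast hγ.ne'
  have h2γC : (2 * (γ : ℂ)) ≠ 0 := by
    simp [hγC]
  set E := Real.exp (-(t / (8 * γ))) with hE
  have hEpos : 0 < E := Real.exp_pos _
  have h8 : Real.exp (-(t / (8 * γ))) ≤ 8 * E := by nlinarith
  by_cases hd : 0 ≤ 1 - 4 * γ * ‖ξ‖ ^ 2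
  · -- real roots case
    set s := Real.sqrt (1 - 4 * γ * ‖ξ‖ ^ 2) with hs
    have hs0 : 0 ≤ s := Real.sqrt_nonneg _
    have hshalf : s ≤ 1 / 2 := by
      rw [hs, show (1/2 : ℝ) = Real.sqrt (1/4) by
        rw [show (1/4:ℝ) = (1/2)^2 by norm_num, Real.sqrt_sq]; norm_num]
      exact Real.sqrt_le_sqrt (by linarith)
    have hdisc : discRoot γ ξ = (s : ℂ) := by rw [discRoot, if_pos hd]
    set a := (-1 + s) * t / (2 * γ) with ha
    set b := (-1 - s) * t / (2 * γ) with hb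
    have ea : lamPlus γ ξ * (t : ℂ) = (a : ℂ) := by
      rw [lamPlus, hdisc, ha]; push_cast; field_simp
    have eb : lamMinus γ ξ * (t : ℂ) = (b : ℂ) := by
      rw [lamMinus, hdisc, hb]; push_cast; field_simp; try ring
    have hba : b ≤ a := by
      rw [ha, hb]
      apply div_le_div_of_nonneg_right _ (by positivity)
      nlinarith
    have haE : a ≤ -(t / (8 * γ)) := by
      rw [ha]
      rw [div_le_iff₀ (by positivity : (0:ℝ) < 2 * γ)]
      have : -(t / (8 * γ)) * (2 * γ) = -(t/4) := by field_simp; ring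
      rw [this]; nlinarith
    have hexpa : Real.exp a ≤ E := by rw [hE]; exact Real.exp_le_exp.2 haE
    constructor
    · rw [K0hat, ea, eb, ← Complex.ofReal_exp, ← Complex.ofReal_exp]
      have : ((Real.exp a : ℝ) : ℂ) + ((Real.exp b : ℝ) : ℂ) = ((Real.exp a + Real.exp b : ℝ) : ℂ) := by
        push_cast; ring
      rw [this, show ((2:ℂ)) = ((2:ℝ):ℂ) by norm_num, ← Complex.ofReal_div, Complex.norm_real, Real.norm_eq_abs]
      rw [abs_of_nonneg (by positivity)]
      have : (Real.exp a + Real.exp b) / 2 ≤ Real.exp a := by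
        have := Real.exp_le_exp.2 hba; linarith
      nlinarith
    · rw [K1hat, denom_eq γ ξ hγ.ne', hdisc, ea, eb, ← Complex.ofReal_exp, ← Complex.ofReal_exp]
      rcases eq_or_lt_of_le hs0 with hs0' | hspos
      · rw [← hs0']
        simp only [Complex.ofReal_zero, div_zero, norm_zero]
        positivity
      · rw [show ((Real.exp a : ℝ) : ℂ) - ((Real.exp b : ℝ) : ℂ) = ((Real.exp a - Real.exp b : ℝ) : ℂ) by push_cast; ring,
          ← Complex.ofReal_div, Complex.norm_real, Real.norm_eq_abs]
        have hnum : Real.exp a - Real.exp b ≤ (a - b) * Real.exp a := by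
          have h1 : Real.exp b = Real.exp a * Real.exp (b - a) := by
            rw [← Real.exp_add]; ring_nf
          have h2 : (b - a) + 1 ≤ Real.exp (b - a) := Real.add_one_le_exp _
          nlinarith [Real.exp_pos a]
        have hab : a - b = s * t / γ := by rw [ha, hb]; field_simp; ring
        rw [abs_of_nonneg (div_nonneg (sub_nonneg.2 (Real.exp_le_exp.2 hba)) hs0)]
        have step1 : (Real.exp a - Real.exp b) / s ≤ t / γ * Real.exp a := by
          rw [div_le_iff₀ hspos]
          calc Real.exp a - Real.exp b ≤ (a - b) * Real.exp a := hnum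
            _ = t / γ * Real.exp a * s := by rw [hab]; field_simp
        have step2 : t / γ * Real.exp a ≤ t / γ * Real.exp (-(t / (4 * γ))) := by
          apply mul_le_mul_of_nonneg_left _ (by positivity)
          apply Real.exp_le_exp.2
          have : -(t / (4 * γ)) ≥ a := by
            rw [ha, ge_iff_le, div_le_iff₀ (by positivity : (0:ℝ) < 2 * γ)]
            have h4 : -(t / (4 * γ)) * (2 * γ) = -(t/2) := by field_simp; ring
            rw [h4]; nlinarith
          linarith
        calc (Real.exp a - Real.exp b) / s ≤ t / γ * Real.exp a := step1
          _ ≤ t / γ * Real.exp (-(t / (4 * γ))) := step2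
          _ ≤ 8 * E := aux_te γ t hγ ht
  · -- complex roots case
    push_neg at hd
    set s := Real.sqrt (4 * γ * ‖ξ‖ ^ 2 - 1) with hs
    have hspos : 0 < s := Real.sqrt_pos.2 (by linarith)
    have hdisc : discRoot γ ξ = Complex.I * (s : ℂ) := by rw [discRoot, if_neg (not_le.2 hd)]
    set x := -t / (2 * γ) with hx
    set θ := s * t / (2 * γ) with hθ
    have hθpos : 0 < θ := by positivity
    have ea : lamPlus γ ξ * (t : ℂ) = (x : ℂ) + (θ : ℂ) * Complex.I := by
      rw [lamPlus, hdisc, hx, hθ]; push_cast; field_simp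
    have eb : lamMinus γ ξ * (t : ℂ) = (x : ℂ) - (θ : ℂ) * Complex.I := by
      rw [lamMinus, hdisc, hx, hθ]; push_cast; field_simp
    have hexpx : Real.exp x ≤ E := by
      rw [hE]; apply Real.exp_le_exp.2
      rw [hx, div_le_iff₀ (by positivity : (0:ℝ) < 2 * γ)]
      have : -(t / (8 * γ)) * (2 * γ) = -(t/4) := by field_simp; ring
      rw [this]; nlinarith
    have hep : Complex.exp ((x : ℂ) + (θ : ℂ) * Complex.I)
        = (Real.exp x : ℂ) * ((Real.cos θ : ℂ) + (Real.sin θ : ℂ) * Complex.I) := by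
      rw [Complex.exp_add, Complex.exp_mul_I, Complex.ofReal_exp, Complex.ofReal_cos,
        Complex.ofReal_sin]
    have hem : Complex.exp ((x : ℂ) - (θ : ℂ) * Complex.I)
        = (Real.exp x : ℂ) * ((Real.cos θ : ℂ) - (Real.sin θ : ℂ) * Complex.I) := by
      rw [sub_eq_add_neg, Complex.exp_add, show -((θ:ℂ) * Complex.I) = (-θ : ℂ) * Complex.I by ring,
        Complex.exp_mul_I, Complex.cos_neg, Complex.sin_neg, Complex.ofReal_exp,
        Complex.ofReal_cos, Complex.ofReal_sin]
      ring
    constructor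
    · rw [K0hat, ea, eb, hep, hem]
      have : (Real.exp x : ℂ) * ((Real.cos θ : ℂ) + (Real.sin θ : ℂ) * Complex.I)
          + (Real.exp x : ℂ) * ((Real.cos θ : ℂ) - (Real.sin θ : ℂ) * Complex.I)
          = ((Real.exp x * Real.cos θ : ℝ) : ℂ) * 2 := by push_cast; ring
      rw [this, mul_div_assoc, div_self (by norm_num : (2:ℂ) ≠ 0), mul_one, Complex.norm_real, Real.norm_eq_abs]
      rw [abs_mul, abs_of_nonneg (Real.exp_pos x).le]
      calc Real.exp x * |Real.cos θ| ≤ Real.exp x * 1 :=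
            mul_le_mul_of_nonneg_left (Real.abs_cos_le_one θ) (Real.exp_pos x).le
        _ = Real.exp x := mul_one _
        _ ≤ E := hexpx
        _ ≤ 8 * E := by linarith
    · rw [K1hat, denom_eq γ ξ hγ.ne', hdisc, ea, eb, hep, hem]
      have hnum : (Real.exp x : ℂ) * ((Real.cos θ : ℂ) + (Real.sin θ : ℂ) * Complex.I)
          - (Real.exp x : ℂ) * ((Real.cos θ : ℂ) - (Real.sin θ : ℂ) * Complex.I)
          = ((2 * Real.exp x * Real.sin θ : ℝ) : ℂ) * Complex.I := by push_cast; ring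
      rw [hnum]
      have hsC : (s : ℂ) ≠ 0 := by exact_mod_cast hspos.ne'
      have hdiv : ((2 * Real.exp x * Real.sin θ : ℝ) : ℂ) * Complex.I / (Complex.I * (s : ℂ))
          = ((2 * Real.exp x * Real.sin θ / s : ℝ) : ℂ) := by
        rw [div_eq_iff (by simp [hsC, Complex.I_ne_zero] : Complex.I * (s:ℂ) ≠ 0)]
        push_cast
        field_simp
      rw [hdiv, Complex.norm_real, Real.norm_eq_abs]
      have hsin : |Real.sin θ| ≤ θ := by
        have := Real.abs_sin_le_abs (x := θ)
        rwa [abs_of_pos hθpos] at this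
      have habs : |2 * Real.exp x * Real.sin θ / s| = 2 * Real.exp x * |Real.sin θ| / s := by
        rw [abs_div, abs_mul, abs_mul, abs_of_nonneg (Real.exp_pos x).le,
          abs_of_pos hspos]
        norm_num
      rw [habs]
      have step1 : 2 * Real.exp x * |Real.sin θ| / s ≤ t / γ * Real.exp x := by
        rw [div_le_iff₀ hspos]
        calc 2 * Real.exp x * |Real.sin θ| ≤ 2 * Real.exp x * θ :=
              mul_le_mul_of_nonneg_left hsin (by positivity)
          _ = t / γ * Real.exp x * s := by rw [hθ]; field_simp
      have step2 : t / γ * Real.exp x ≤ t / γ * Real.exp (-(t / (4 * γ))) := by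
        apply mul_le_mul_of_nonneg_left _ (by positivity)
        apply Real.exp_le_exp.2
        rw [hx]
        rw [div_le_iff₀ (by positivity : (0:ℝ) < 2 * γ)]
        have : -(t / (4 * γ)) * (2 * γ) = -(t/2) := by field_simp; ring
        rw [this]; nlinarith
      calc 2 * Real.exp x * |Real.sin θ| / s ≤ t / γ * Real.exp x := step1
        _ ≤ t / γ * Real.exp (-(t / (4 * γ))) := step2
        _ ≤ 8 * E := aux_te γ t hγ ht

end
end

section
/- With the notation of the previous statement, for all ξ with 4γ|ξ|² ≥ 3/4, all t > 0, and every 0 ≤ ϑ ≤ 1, one has |K̂₁(ξ,t)| ≤ C γ^{-ϑ/2} |ξ|^{-ϑ} e^{-t/(8γ)} for an absolute constant C. -/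
open Real

noncomputable section

lemma K1hat_eq {γ : ℝ} (hγ : γ ≠ 0) (ξ : EuclideanSpace ℝ (Fin 2)) (t : ℝ) :
    K1hat γ ξ t = (Complex.exp (lamPlus γ ξ * (t : ℂ)) - Complex.exp (lamMinus γ ξ * (t : ℂ))) /
      discRoot γ ξ := by
  have h : (γ:ℂ) ≠ 0 := by exact_mod_cast hγ
  unfold K1hat lamPlus lamMinus
  congr 1
  field_simp
  ring

lemma exp_aux {u : ℝ} (hu : 0 ≤ u) : u * Real.exp (-(u/4)) ≤ 8 * Real.exp (-(u/8)) := by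
  have h1 := Real.add_one_le_exp (u/8)
  have h2 : Real.exp (-(u/8)) * Real.exp (u/8) = 1 := by
    rw [← Real.exp_add]; simp
  have h3 : u * Real.exp (-(u/8)) ≤ 8 := by
    nlinarith [Real.exp_pos (u/8), Real.exp_pos (-(u/8))]
  have h4 : Real.exp (-(u/4)) = Real.exp (-(u/8)) * Real.exp (-(u/8)) := by
    rw [← Real.exp_add]; ring_nf
  calc u * Real.exp (-(u/4)) = (u * Real.exp (-(u/8))) * Real.exp (-(u/8)) := by rw [h4]; ring
    _ ≤ 8 * Real.exp (-(u/8)) := mul_le_mul_of_nonneg_right h3 (Real.exp_pos _).le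

lemma caseA {γ t : ℝ} {ξ : EuclideanSpace ℝ (Fin 2)} (hγ : 0 < γ) (ht : 0 < t)
    (hfreq : 3/4 ≤ 4 * γ * ‖ξ‖ ^ 2) (hd : 0 ≤ 1 - 4 * γ * ‖ξ‖ ^ 2) :
    ‖K1hat γ ξ t‖ ≤ 8 * Real.exp (-(t / (8 * γ))) := by
  set s : ℝ := Real.sqrt (1 - 4 * γ * ‖ξ‖ ^ 2) with hs_def
  have hs0 : 0 ≤ s := Real.sqrt_nonneg _
  have hs2 : s ^ 2 = 1 - 4 * γ * ‖ξ‖ ^ 2 := Real.sq_sqrt hd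
  have hs_half : s ≤ 1/2 := by nlinarith
  set a : ℝ := (-1 + s) / (2 * γ) with ha_def
  set b : ℝ := (-1 - s) / (2 * γ) with hb_def
  have hlamp : lamPlus γ ξ = ((a : ℝ) : ℂ) := by
    unfold lamPlus discRoot; rw [if_pos hd, ha_def]; push_cast; ring
  have hlamm : lamMinus γ ξ = ((b : ℝ) : ℂ) := by
    unfold lamMinus discRoot; rw [if_pos hd, hb_def]; push_cast; ring
  have hdr : discRoot γ ξ = ((s : ℝ) : ℂ) := by rw [discRoot, if_pos hd]
  have key : K1hat γ ξ t = (((Real.exp (a*t) - Real.exp (b*t)) / s : ℝ) : ℂ) := by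
    rw [K1hat_eq hγ.ne', hlamp, hlamm, hdr]
    push_cast [Complex.ofReal_exp]
    ring_nf
  rw [key, Complex.norm_real, Real.norm_eq_abs]
  have hEpos : 0 < Real.exp (-(t / (8 * γ))) := Real.exp_pos _
  rcases eq_or_lt_of_le hs0 with hs | hs
  · have hab : a = b := by rw [ha_def, hb_def, ← hs]; ring
    rw [hab]; simp; positivity
  · have habd : a - b = s / γ := by rw [ha_def, hb_def]; field_simp; ring
    have hba : Real.exp (b*t) ≤ Real.exp (a*t) := by
      apply Real.exp_le_exp.mpr
      nlinarith [div_pos hs hγ]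
    have hE := Real.add_one_le_exp ((b-a)*t)
    have hsplit : Real.exp (b*t) = Real.exp (a*t) * Real.exp ((b-a)*t) := by
      rw [← Real.exp_add]; ring_nf
    have h1 : Real.exp (a*t) - Real.exp (b*t) ≤ (a-b)*t*Real.exp (a*t) := by
      nlinarith [Real.exp_pos (a*t)]
    rw [abs_of_nonneg (div_nonneg (by linarith) hs0)]
    have step : (Real.exp (a*t) - Real.exp (b*t)) / s ≤ (t/γ) * Real.exp (a*t) := by
      rw [div_le_iff₀ hs]
      calc Real.exp (a*t) - Real.exp (b*t) ≤ (a-b)*t*Real.exp (a*t) := h1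
        _ = (t/γ) * Real.exp (a*t) * s := by rw [habd]; field_simp
    have ha' : a ≤ (-1)/(4*γ) := by
      rw [ha_def, div_le_div_iff₀ (by linarith) (by linarith)]
      nlinarith
    have hexp_a : Real.exp (a*t) ≤ Real.exp (-(t/(4*γ))) := by
      apply Real.exp_le_exp.mpr
      calc a * t ≤ ((-1)/(4*γ)) * t := mul_le_mul_of_nonneg_right ha' ht.le
        _ = -(t/(4*γ)) := by ring
    calc (Real.exp (a*t) - Real.exp (b*t)) / s ≤ (t/γ) * Real.exp (a*t) := step
      _ ≤ (t/γ) * Real.exp (-(t/(4*γ))) :=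
          mul_le_mul_of_nonneg_left hexp_a (div_nonneg ht.le hγ.le)
      _ ≤ 8 * Real.exp (-(t/(8*γ))) := by
          have h := exp_aux (u := t/γ) (div_nonneg ht.le hγ.le)
          rw [show t/γ/4 = t/(4*γ) by ring, show t/γ/8 = t/(8*γ) by ring] at h
          exact h

lemma caseB_abs {γ t : ℝ} {ξ : EuclideanSpace ℝ (Fin 2)} (hγ : 0 < γ)
    (hd : ¬ 0 ≤ 1 - 4 * γ * ‖ξ‖ ^ 2) :
    ‖K1hat γ ξ t‖
      = Real.exp (-(t/(2*γ))) * (2 * |Real.sin (Real.sqrt (4*γ*‖ξ‖^2-1) * t / (2*γ))|)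
        / Real.sqrt (4*γ*‖ξ‖^2-1) := by
  push_neg at hd
  set s : ℝ := Real.sqrt (4*γ*‖ξ‖^2-1) with hs_def
  have hs : 0 < s := Real.sqrt_pos.mpr (by linarith)
  set r : ℝ := -(t/(2*γ)) with hr_def
  set θ : ℝ := s * t / (2*γ) with hθ_def
  have claim1 : lamPlus γ ξ * (t:ℂ) = (r:ℂ) + (θ:ℂ) * Complex.I := by
    unfold lamPlus discRoot
    rw [if_neg (by linarith), hr_def, hθ_def]
    have h2γ : ((2:ℂ) * (γ:ℂ)) ≠ 0 := by
      simp [Complex.ext_iff]; exact hγ.ne'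
    rw [← hs_def]
    field_simp
    push_cast
    ring
  have claim2 : lamMinus γ ξ * (t:ℂ) = (r:ℂ) - (θ:ℂ) * Complex.I := by
    unfold lamMinus discRoot
    rw [if_neg (by linarith), hr_def, hθ_def]
    have h2γ : ((2:ℂ) * (γ:ℂ)) ≠ 0 := by
      simp [Complex.ext_iff]; exact hγ.ne'
    rw [← hs_def]
    field_simp
    push_cast
    ring
  have hnum : Complex.exp (lamPlus γ ξ * (t:ℂ)) - Complex.exp (lamMinus γ ξ * (t:ℂ))
      = ((Real.exp r : ℝ) : ℂ) * (2 * ((Real.sin θ : ℝ) : ℂ) * Complex.I) := by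
    rw [claim1, claim2, sub_eq_add_neg (r:ℂ), ← neg_mul, Complex.exp_add, Complex.exp_add]
    rw [show ((-(θ:ℂ)) * Complex.I) = ((-θ : ℝ):ℂ) * Complex.I by push_cast; ring]
    rw [Complex.exp_mul_I, Complex.exp_mul_I]
    rw [← Complex.ofReal_cos, ← Complex.ofReal_sin, ← Complex.ofReal_cos, ← Complex.ofReal_sin,
      ← Complex.ofReal_exp]
    rw [Real.cos_neg, Real.sin_neg]
    push_cast
    ring
  rw [K1hat_eq hγ.ne' ξ t, hnum]
  rw [show discRoot γ ξ = Complex.I * ((s:ℝ):ℂ) by rw [discRoot, if_neg (by linarith)]]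
  rw [norm_div]
  simp only [norm_mul, Complex.norm_real, Real.norm_eq_abs, Complex.norm_I, RCLike.norm_two]
  rw [abs_of_pos (Real.exp_pos r), abs_of_pos hs]
  ring

lemma caseB_triv {γ t : ℝ} {ξ : EuclideanSpace ℝ (Fin 2)} (hγ : 0 < γ) (ht : 0 < t)
    (hd : ¬ 0 ≤ 1 - 4 * γ * ‖ξ‖ ^ 2) :
    ‖K1hat γ ξ t‖ ≤ 8 * Real.exp (-(t / (8 * γ))) := by
  rw [caseB_abs hγ hd]
  push_neg at hd
  set s : ℝ := Real.sqrt (4*γ*‖ξ‖^2-1) with hs_def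
  have hs : 0 < s := Real.sqrt_pos.mpr (by linarith)
  set θ : ℝ := s * t / (2*γ) with hθ_def
  have hθ0 : 0 ≤ θ := by positivity
  have hsin : |Real.sin θ| ≤ θ := (Real.abs_sin_le_abs).trans_eq (abs_of_nonneg hθ0)
  have hE24 : Real.exp (-(t/(2*γ))) ≤ Real.exp (-(t/(4*γ))) := by
    apply Real.exp_le_exp.mpr
    have h1 : t/(4*γ) ≤ t/(2*γ) := by
      apply div_le_div_of_nonneg_left ht.le (by linarith) (by linarith)
    linarith
  calc Real.exp (-(t/(2*γ))) * (2 * |Real.sin θ|) / s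
      ≤ Real.exp (-(t/(2*γ))) * (2 * θ) / s := by
        gcongr
    _ = (t/γ) * Real.exp (-(t/(2*γ))) := by
        rw [hθ_def]; field_simp
    _ ≤ (t/γ) * Real.exp (-(t/(4*γ))) :=
        mul_le_mul_of_nonneg_left hE24 (div_nonneg ht.le hγ.le)
    _ ≤ 8 * Real.exp (-(t/(8*γ))) := by
        have h := exp_aux (u := t/γ) (div_nonneg ht.le hγ.le)
        rw [show t/γ/4 = t/(4*γ) by ring, show t/γ/8 = t/(8*γ) by ring] at h
        exact h

lemma caseB_gain {γ t : ℝ} {ξ : EuclideanSpace ℝ (Fin 2)} (hγ : 0 < γ) (ht : 0 < t)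
    (hA1 : 1 ≤ γ * ‖ξ‖ ^ 2) :
    ‖K1hat γ ξ t‖
      ≤ 2 * (γ * ‖ξ‖ ^ 2) ^ (-(1/2) : ℝ) * Real.exp (-(t / (8 * γ))) := by
  have hd : ¬ 0 ≤ 1 - 4 * γ * ‖ξ‖ ^ 2 := by push_neg; nlinarith
  rw [caseB_abs hγ hd]
  push_neg at hd
  set s : ℝ := Real.sqrt (4*γ*‖ξ‖^2-1) with hs_def
  have hs : 0 < s := Real.sqrt_pos.mpr (by linarith)
  set θ : ℝ := s * t / (2*γ) with hθ_def
  have hA0 : (0:ℝ) < γ * ‖ξ‖ ^ 2 := by linarith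
  set q : ℝ := Real.sqrt (γ * ‖ξ‖ ^ 2) with hq_def
  have hq : 0 < q := Real.sqrt_pos.mpr hA0
  have hqs : q ≤ s := Real.sqrt_le_sqrt (by nlinarith)
  have hE28 : Real.exp (-(t/(2*γ))) ≤ Real.exp (-(t/(8*γ))) := by
    apply Real.exp_le_exp.mpr
    have h1 : t/(8*γ) ≤ t/(2*γ) := by
      apply div_le_div_of_nonneg_left ht.le (by linarith) (by linarith)
    linarith
  have hrpow : (γ * ‖ξ‖ ^ 2) ^ (-(1/2) : ℝ) = 1 / q := by
    rw [hq_def, Real.sqrt_eq_rpow, Real.rpow_neg hA0.le]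
    norm_num
  calc Real.exp (-(t/(2*γ))) * (2 * |Real.sin θ|) / s
      ≤ Real.exp (-(t/(2*γ))) * (2 * 1) / s := by
        gcongr
        exact Real.abs_sin_le_one θ
    _ = Real.exp (-(t/(2*γ))) * 2 / s := by ring
    _ ≤ Real.exp (-(t/(2*γ))) * 2 / q :=
        div_le_div_of_nonneg_left (by positivity) hq hqs
    _ = 2 * (1/q) * Real.exp (-(t/(2*γ))) := by ring
    _ ≤ 2 * (1/q) * Real.exp (-(t/(8*γ))) := by
        apply mul_le_mul_of_nonneg_left hE28
        positivity
    _ = 2 * (γ * ‖ξ‖ ^ 2) ^ (-(1/2) : ℝ) * Real.exp (-(t/(8*γ))) := by rw [hrpow]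

/-- High-frequency bound with a gain of `ϑ` derivatives: for `4γ|ξ|² ≥ 3/4`, `t > 0`
and `0 ≤ ϑ ≤ 1`, `|K̂₁(ξ,t)| ≤ C γ^{-ϑ/2} |ξ|^{-ϑ} e^{-t/(8γ)}`. -/
theorem stmt_6 :
    ∃ C : ℝ, 0 < C ∧ ∀ (γ t ϑ : ℝ) (ξ : EuclideanSpace ℝ (Fin 2)),
      0 < γ → 0 < t → 0 ≤ ϑ → ϑ ≤ 1 → 3/4 ≤ 4 * γ * ‖ξ‖ ^ 2 →
        ‖K1hat γ ξ t‖
          ≤ C * γ ^ (-(ϑ/2)) * ‖ξ‖ ^ (-ϑ) * Real.exp (-(t / (8 * γ))) := by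
  refine ⟨8, by norm_num, ?_⟩
  intro γ t ϑ ξ hγ ht hϑ0 hϑ1 hfreq
  have hn2 : 0 < ‖ξ‖ ^ 2 := by nlinarith
  have hA0 : (0:ℝ) < γ * ‖ξ‖ ^ 2 := mul_pos hγ hn2
  have hEpos : (0:ℝ) < Real.exp (-(t / (8 * γ))) := Real.exp_pos _
  have hrw : γ ^ (-(ϑ/2)) * ‖ξ‖ ^ (-ϑ) = (γ * ‖ξ‖ ^ 2) ^ (-(ϑ/2)) := by
    rw [Real.mul_rpow hγ.le (by positivity)]
    congr 1
    rw [← Real.rpow_natCast ‖ξ‖ 2, ← Real.rpow_mul (norm_nonneg ξ)]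
    congr 1
    push_cast
    ring
  rw [show (8:ℝ) * γ ^ (-(ϑ/2)) * ‖ξ‖ ^ (-ϑ) * Real.exp (-(t / (8 * γ)))
      = 8 * (γ ^ (-(ϑ/2)) * ‖ξ‖ ^ (-ϑ)) * Real.exp (-(t / (8 * γ))) by ring, hrw]
  rcases le_or_gt (γ * ‖ξ‖ ^ 2) 1 with hA1 | hA1
  · have h1 : 1 ≤ (γ * ‖ξ‖ ^ 2) ^ (-(ϑ/2)) :=
      Real.one_le_rpow_of_pos_of_le_one_of_nonpos hA0 hA1 (by linarith)
    have htr : ‖K1hat γ ξ t‖ ≤ 8 * Real.exp (-(t / (8 * γ))) := by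
      by_cases hd : 0 ≤ 1 - 4 * γ * ‖ξ‖ ^ 2
      · exact caseA hγ ht hfreq hd
      · exact caseB_triv hγ ht hd
    calc ‖K1hat γ ξ t‖ ≤ 8 * Real.exp (-(t / (8 * γ))) := htr
      _ ≤ 8 * (γ * ‖ξ‖ ^ 2) ^ (-(ϑ/2)) * Real.exp (-(t / (8 * γ))) := by
          nlinarith
  · have h2 : (γ * ‖ξ‖ ^ 2) ^ (-(1/2) : ℝ) ≤ (γ * ‖ξ‖ ^ 2) ^ (-(ϑ/2)) :=
      Real.rpow_le_rpow_of_exponent_le hA1.le (by linarith)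
    have hgain := caseB_gain hγ ht hA1.le
    calc ‖K1hat γ ξ t‖
        ≤ 2 * (γ * ‖ξ‖ ^ 2) ^ (-(1/2) : ℝ) * Real.exp (-(t / (8 * γ))) := hgain
      _ ≤ 8 * (γ * ‖ξ‖ ^ 2) ^ (-(ϑ/2)) * Real.exp (-(t / (8 * γ))) := by
          have hp : (0:ℝ) ≤ (γ * ‖ξ‖ ^ 2) ^ (-(1/2) : ℝ) := Real.rpow_nonneg hA0.le _
          nlinarith

end
end

section
/- With the same notation, for all ξ with 4γ|ξ|² < 3/4 and all t > 0, one has |K̂₀(ξ,t)| ≤ C e^{-|ξ|² t} and |K̂₁(ξ,t)| ≤ C e^{-|ξ|² t} for an absolute constant C. -/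
open Real

noncomputable section

/-- Low-frequency bounds: for `4γ|ξ|² < 3/4` and `t > 0`,
`|K̂₀(ξ,t)| ≤ C e^{-|ξ|²t}` and `|K̂₁(ξ,t)| ≤ C e^{-|ξ|²t}`. -/
theorem stmt_7 :
    ∃ C : ℝ, 0 < C ∧ ∀ (γ t : ℝ) (ξ : EuclideanSpace ℝ (Fin 2)),
      0 < γ → 0 < t → 4 * γ * ‖ξ‖ ^ 2 < 3/4 →
        ‖K0hat γ ξ t‖ ≤ C * Real.exp (-(‖ξ‖ ^ 2 * t)) ∧
        ‖K1hat γ ξ t‖ ≤ C * Real.exp (-(‖ξ‖ ^ 2 * t)) := by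
  refine ⟨2, by norm_num, ?_⟩
  intro γ t ξ hγ ht hlow
  set r : ℝ := ‖ξ‖ ^ 2 with hr
  have hr0 : 0 ≤ r := by positivity
  have hd : (0:ℝ) < 1 - 4 * γ * r := by linarith
  set s : ℝ := Real.sqrt (1 - 4 * γ * r) with hs
  have hs2 : s ^ 2 = 1 - 4 * γ * r := Real.sq_sqrt hd.le
  have hs0 : 0 < s := Real.sqrt_pos.mpr hd
  have hshalf : 1/2 ≤ s := by nlinarith [hs2, hs0]
  have hdisc : discRoot γ ξ = (s : ℂ) := by
    rw [discRoot, if_pos (by rw [← hr]; linarith)]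
  set lp : ℝ := (-1 + s) / (2*γ) with hlp
  set lm : ℝ := (-1 - s) / (2*γ) with hlm
  have hLp : lamPlus γ ξ = (lp : ℂ) := by
    rw [lamPlus, hdisc, hlp]; push_cast; ring
  have hLm : lamMinus γ ξ = (lm : ℂ) := by
    rw [lamMinus, hdisc, hlm]; push_cast; ring
  have hEp : Complex.exp (lamPlus γ ξ * (t:ℂ)) = ((Real.exp (lp * t) : ℝ) : ℂ) := by
    rw [hLp, ← Complex.ofReal_mul, Complex.ofReal_exp]
  have hEm : Complex.exp (lamMinus γ ξ * (t:ℂ)) = ((Real.exp (lm * t) : ℝ) : ℂ) := by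
    rw [hLm, ← Complex.ofReal_mul, Complex.ofReal_exp]
  have hlpr : lp ≤ -r := by
    rw [hlp, div_le_iff₀ (by positivity : (0:ℝ) < 2*γ)]
    nlinarith [hs2, hs0, sq_nonneg (γ*r), hlow]
  have hlmlp : lm ≤ lp := by
    rw [hlp, hlm]
    exact (div_le_div_iff_of_pos_right (by positivity)).mpr (by linarith)
  have hEpb : Real.exp (lp * t) ≤ Real.exp (-(r * t)) := by
    apply Real.exp_le_exp.mpr; nlinarith
  have hEmb : Real.exp (lm * t) ≤ Real.exp (lp * t) := by
    apply Real.exp_le_exp.mpr; nlinarith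
  constructor
  · rw [K0hat, hEp, hEm]
    rw [show (((Real.exp (lp*t) : ℝ) : ℂ) + ((Real.exp (lm*t) : ℝ) : ℂ)) / 2
        = (((Real.exp (lp*t) + Real.exp (lm*t)) / 2 : ℝ) : ℂ) by push_cast; ring]
    rw [Complex.norm_real, Real.norm_eq_abs, abs_of_pos (by positivity)]
    have h1 := Real.exp_pos (lm * t)
    have h2 := Real.exp_pos (lp * t)
    nlinarith [hEpb, hEmb, Real.exp_pos (-(r*t))]
  · rw [K1hat, hEp, hEm, hLp, hLm]
    rw [show ((γ:ℂ) * ((lp:ℂ) - (lm:ℂ))) = ((γ * (lp - lm) : ℝ) : ℂ) by push_cast; ring]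
    have hden : γ * (lp - lm) = s := by
      rw [hlp, hlm]; field_simp; ring
    rw [hden]
    rw [show (((Real.exp (lp*t) : ℝ) : ℂ) - ((Real.exp (lm*t) : ℝ) : ℂ)) / ((s:ℝ):ℂ)
        = (((Real.exp (lp*t) - Real.exp (lm*t)) / s : ℝ) : ℂ) by push_cast; ring]
    rw [Complex.norm_real, Real.norm_eq_abs]
    have h2 := Real.exp_pos (lm * t)
    rw [abs_of_nonneg (div_nonneg (by linarith [hEmb]) hs0.le)]
    rw [div_le_iff₀ hs0]
    nlinarith [hEpb, hEmb, Real.exp_pos (-(r*t)), Real.exp_pos (lm*t)]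

end
end
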